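/- arXiv:1512.05489 — 3 statements merged into one kernel-verified Lean document; each statement's English description precedes it below -/
import Mathlib

section
/- Let (Ω, ℱ, P) be a probability space and let X : Ω → ℝ be measurable and essentially bounded. Then the conditional value-at-risk of X converges to the essential supremum of X as the level tends to zero from above: the function α ↦ inf_{τ∈ℝ} ( τ + α⁻¹ · ∫ max(X(ω) − τ, 0) dP(ω) ) tends to essSup X as α → 0⁺ (i.e., along the filter of right neighborhoods of 0). -/
open MeasureTheory Filter

/-- For a measurable and essentially bounded random variable `X` on a
probability space, the conditional value-at-risk `CVaR_α(X)` tends to the essential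
supremum of `X` as `α → 0⁺`. -/
theorem stmt_7 {Ω : Type*} [MeasurableSpace Ω] (P : Measure Ω) [IsProbabilityMeasure P]
    (X : Ω → ℝ) (hmeas : Measurable X) (hbdd : ∃ C : ℝ, ∀ᵐ ω ∂P, |X ω| ≤ C) :
    Tendsto (fun α : ℝ => ⨅ τ : ℝ, (τ + α⁻¹ * ∫ ω, max (X ω - τ) 0 ∂P))
      (nhdsWithin 0 (Set.Ioi 0)) (nhds (essSup X P)) := by
  obtain ⟨C, hC⟩ := hbdd
  set M := essSup X P with hMdef
  have hBdd : IsBoundedUnder (· ≤ ·) (ae P) X :=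
    ⟨C, eventually_map.mpr (by filter_upwards [hC] with ω h using (abs_le.mp h).2)⟩
  have hCobdd : IsCoboundedUnder (· ≤ ·) (ae P) X :=
    IsBoundedUnder.isCoboundedUnder_le ⟨-C, eventually_map.mpr (by filter_upwards [hC] with ω h using (abs_le.mp h).1)⟩
  have hXle : ∀ᵐ ω ∂P, X ω ≤ M := ae_le_essSup hBdd
  -- integrability of the positive part
  have hint : ∀ τ : ℝ, Integrable (fun ω => max (X ω - τ) 0) P := by
    intro τ
    refine Integrable.mono' (integrable_const (C + |τ|))
      ((hmeas.sub measurable_const).max measurable_const).aestronglyMeasurable ?_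
    filter_upwards [hC] with ω h
    rw [Real.norm_eq_abs, abs_of_nonneg (le_max_right _ _)]
    have := abs_le.mp h
    have := abs_nonneg τ
    have := neg_abs_le τ
    have := le_abs_self τ
    simp only [max_le_iff]
    constructor <;> linarith
  have hnonneg : ∀ τ : ℝ, (0:ℝ) ≤ ∫ ω, max (X ω - τ) 0 ∂P := fun τ =>
    integral_nonneg fun ω => le_max_right _ _
  rw [Metric.tendsto_nhdsWithin_nhds]
  intro ε hε
  set M' := M - ε / 2 with hM'def
  -- the set where X exceeds M' has positive measure
  have hA : P {ω | M' < X ω} ≠ 0 := by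
    intro h0
    have hle : ∀ᵐ ω ∂P, X ω ≤ M' := by
      rw [ae_iff]
      simpa only [not_le] using h0
    have : M ≤ M' := limsup_le_of_le hCobdd hle
    simp only [hM'def] at this
    linarith
  set p := (P {ω | M' < X ω}).toReal with hpdef
  have hp : 0 < p := by
    rw [hpdef]
    exact ENNReal.toReal_pos hA (measure_ne_top P _)
  refine ⟨p, hp, ?_⟩
  intro α hα hdist
  have hα0 : (0:ℝ) < α := hα
  have hαp : α ≤ p := by
    rw [Real.dist_eq, sub_zero, abs_of_pos hα0] at hdist
    exact hdist.le
  -- lower bound : M' ≤ f τ for all τ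
  have hlb : ∀ τ : ℝ, M' ≤ τ + α⁻¹ * ∫ ω, max (X ω - τ) 0 ∂P := by
    intro τ
    rcases le_or_gt M' τ with hτ | hτ
    · have : 0 ≤ α⁻¹ * ∫ ω, max (X ω - τ) 0 ∂P :=
        mul_nonneg (inv_nonneg.mpr hα0.le) (hnonneg τ)
      exact le_trans hτ (le_add_of_nonneg_right this)
    · -- integral ≥ p * (M' - τ)
      have hAmeas : MeasurableSet {ω | M' < X ω} := measurableSet_lt measurable_const hmeas
      have h1 : ∫ ω in {ω | M' < X ω}, (M' - τ) ∂P ≤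
          ∫ ω in {ω | M' < X ω}, max (X ω - τ) 0 ∂P := by
        refine setIntegral_mono_on ((integrableOn_const_iff).mpr (Or.inr (measure_lt_top P _)))
          ((hint τ).integrableOn) hAmeas ?_
        intro ω hω
        have : M' < X ω := hω
        exact le_max_of_le_left (by linarith)
      have h2 : ∫ ω in {ω | M' < X ω}, max (X ω - τ) 0 ∂P ≤ ∫ ω, max (X ω - τ) 0 ∂P :=
        setIntegral_le_integral (hint τ) (Eventually.of_forall fun ω => le_max_right _ _)
      rw [setIntegral_const, smul_eq_mul] at h1
      have hkey : p * (M' - τ) ≤ ∫ ω, max (X ω - τ) 0 ∂P := le_trans h1 h2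
      have hαkey : α * (M' - τ) ≤ p * (M' - τ) :=
        mul_le_mul_of_nonneg_right hαp (by linarith)
      have : M' - τ ≤ α⁻¹ * ∫ ω, max (X ω - τ) 0 ∂P := by
        rw [← inv_mul_cancel_left₀ hα0.ne' (M' - τ)]
        exact mul_le_mul_of_nonneg_left (le_trans hαkey hkey) (inv_nonneg.mpr hα0.le)
      linarith
  have hbddBelow : BddBelow (Set.range fun τ : ℝ => τ + α⁻¹ * ∫ ω, max (X ω - τ) 0 ∂P) :=
    ⟨M', by rintro _ ⟨τ, rfl⟩; exact hlb τ⟩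
  -- upper bound : inf ≤ f M = M
  have hub : (⨅ τ : ℝ, (τ + α⁻¹ * ∫ ω, max (X ω - τ) 0 ∂P)) ≤ M := by
    have hzero : ∫ ω, max (X ω - M) 0 ∂P = 0 := by
      refine integral_eq_zero_of_ae ?_
      filter_upwards [hXle] with ω h
      simp [max_eq_right, sub_nonpos.mpr h]
    calc (⨅ τ : ℝ, (τ + α⁻¹ * ∫ ω, max (X ω - τ) 0 ∂P)) ≤
        M + α⁻¹ * ∫ ω, max (X ω - M) 0 ∂P := ciInf_le hbddBelow M
      _ = M := by rw [hzero]; ring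
  have hlb' : M' ≤ ⨅ τ : ℝ, (τ + α⁻¹ * ∫ ω, max (X ω - τ) 0 ∂P) := le_ciInf hlb
  rw [Real.dist_eq, abs_lt]
  constructor <;> [skip; skip] <;> simp only [hM'def] at hlb' <;> linarith
end

section
/- Let K be a nonempty finite index set, let π : K → ℝ satisfy π_k ≥ 0 for all k and Σ_{k∈K} π_k = 1, let v : K → ℝ, and let α ∈ (0, 1]. Then the conditional value-at-risk of the discrete distribution with weights π admits the dual representation inf_{τ∈ℝ} ( τ + α⁻¹ · Σ_{k∈K} π_k · max(v_k − τ, 0) ) = max { α⁻¹ · Σ_{k∈K} ν_k · v_k : ν : K → ℝ, 0 ≤ ν_k ≤ π_k for all k, Σ_{k∈K} ν_k = α }, where the maximum on the right-hand side is attained. -/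
/-- Dual representation of the conditional value-at-risk of a discrete
distribution with weights `π` at level `α ∈ (0,1]`; the maximum in the dual is attained. -/
theorem stmt_8 {K : Type*} [Fintype K] [Nonempty K]
    (π : K → ℝ) (hπ : ∀ k, 0 ≤ π k) (hsum : ∑ k, π k = 1)
    (v : K → ℝ) (α : ℝ) (hα : α ∈ Set.Ioc (0 : ℝ) 1) :
    ∃ ν : K → ℝ, (∀ k, 0 ≤ ν k ∧ ν k ≤ π k) ∧ (∑ k, ν k = α) ∧
      (⨅ τ : ℝ, (τ + α⁻¹ * ∑ k, π k * max (v k - τ) 0)) = α⁻¹ * ∑ k, ν k * v k ∧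
      ∀ ν' : K → ℝ, (∀ k, 0 ≤ ν' k ∧ ν' k ≤ π k) → (∑ k, ν' k = α) →
        α⁻¹ * ∑ k, ν' k * v k ≤ α⁻¹ * ∑ k, ν k * v k := by
  obtain ⟨hα0, hα1⟩ := hα
  set f : ℝ → ℝ := fun τ => τ + α⁻¹ * ∑ k, π k * max (v k - τ) 0 with hfdef
  -- weak duality
  have weak : ∀ (ν' : K → ℝ), (∀ k, 0 ≤ ν' k ∧ ν' k ≤ π k) → (∑ k, ν' k = α) →
      ∀ τ : ℝ, α⁻¹ * ∑ k, ν' k * v k ≤ f τ := by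
    intro ν' hν' hsν' τ
    have h1 : ∑ k, ν' k * v k = (∑ k, ν' k * (v k - τ)) + α * τ := by
      rw [← hsν', Finset.sum_mul, ← Finset.sum_add_distrib]
      exact Finset.sum_congr rfl fun k _ => by ring
    have h3 : ∑ k, ν' k * (v k - τ) ≤ ∑ k, π k * max (v k - τ) 0 := by
      refine Finset.sum_le_sum fun k _ => ?_
      calc ν' k * (v k - τ) ≤ ν' k * max (v k - τ) 0 :=
            mul_le_mul_of_nonneg_left (le_max_left _ _) (hν' k).1
        _ ≤ π k * max (v k - τ) 0 :=
            mul_le_mul_of_nonneg_right (hν' k).2 (le_max_right _ _)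
    have h4 := mul_le_mul_of_nonneg_left h3 (inv_nonneg.mpr hα0.le)
    have h5 : α⁻¹ * (α * τ) = τ := by field_simp
    rw [h1, mul_add, h5]
    simp only [hfdef]
    linarith
  -- construction of τ via the finite set of values
  classical
  set T : Finset ℝ := Finset.univ.image v with hT
  have hTne : T.Nonempty := ⟨v (Classical.arbitrary K), Finset.mem_image_of_mem v (Finset.mem_univ _)⟩
  set g : ℝ → ℝ := fun t => ∑ k ∈ Finset.univ.filter (fun k => t < v k), π k with hg
  set S : Finset ℝ := T.filter (fun t => g t ≤ α) with hS
  have hSne : S.Nonempty := by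
    refine ⟨T.max' hTne, Finset.mem_filter.mpr ⟨T.max'_mem hTne, ?_⟩⟩
    have : Finset.univ.filter (fun k => T.max' hTne < v k) = ∅ := by
      refine Finset.filter_eq_empty_iff.mpr fun k _ => not_lt.mpr ?_
      exact Finset.le_max' T (v k) (Finset.mem_image_of_mem v (Finset.mem_univ _))
    simp only [hg, this, Finset.sum_empty]
    exact hα0.le
  set τ : ℝ := S.min' hSne with hτ
  have hτS : τ ∈ S := S.min'_mem hSne
  have hA : g τ ≤ α := (Finset.mem_filter.mp hτS).2
  set B : ℝ := ∑ k ∈ Finset.univ.filter (fun k => τ ≤ v k), π k with hB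
  have hBα : α ≤ B := by
    by_cases hcase : ∃ t ∈ T, t < τ
    · set T' : Finset ℝ := T.filter (fun t => t < τ) with hT'
      have hT'ne : T'.Nonempty := by
        obtain ⟨t, ht, htlt⟩ := hcase
        exact ⟨t, Finset.mem_filter.mpr ⟨ht, htlt⟩⟩
      set t' : ℝ := T'.max' hT'ne with ht'
      have ht'mem : t' ∈ T' := T'.max'_mem hT'ne
      have ht'T : t' ∈ T := (Finset.mem_filter.mp ht'mem).1
      have ht'lt : t' < τ := (Finset.mem_filter.mp ht'mem).2
      have ht'nS : t' ∉ S := fun h => absurd (S.min'_le t' h) (not_le.mpr ht'lt)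
      have hgt' : α < g t' := by
        by_contra h
        exact ht'nS (Finset.mem_filter.mpr ⟨ht'T, not_lt.mp h⟩)
      have heq : Finset.univ.filter (fun k => t' < v k) = Finset.univ.filter (fun k => τ ≤ v k) := by
        ext k
        simp only [Finset.mem_filter, Finset.mem_univ, true_and]
        constructor
        · intro h
          by_contra hle
          push_neg at hle
          have hvT' : v k ∈ T' := Finset.mem_filter.mpr
            ⟨Finset.mem_image_of_mem v (Finset.mem_univ _), hle⟩
          exact absurd (T'.le_max' (v k) hvT') (not_le.mpr h)
        · intro h; exact lt_of_lt_of_le ht'lt h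
      have : g t' = B := by rw [hg, hB]; simp only []; rw [heq]
      linarith
    · push_neg at hcase
      have : Finset.univ.filter (fun k => τ ≤ v k) = Finset.univ := by
        refine Finset.filter_true_of_mem fun k _ => ?_
        exact hcase (v k) (Finset.mem_image_of_mem v (Finset.mem_univ _))
      rw [hB, this, hsum]
      exact hα1
  -- split B
  have hsplit : B = g τ + ∑ k ∈ Finset.univ.filter (fun k => v k = τ), π k := by
    rw [hB, hg]
    rw [← Finset.sum_filter_add_sum_filter_not (Finset.univ.filter (fun k => τ ≤ v k))
      (fun k => τ < v k)]
    congr 1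
    · congr 1
      ext k
      simp only [Finset.mem_filter, Finset.mem_univ, true_and]
      constructor
      · rintro ⟨_, h⟩; exact h
      · intro h; exact ⟨h.le, h⟩
    · congr 1
      ext k
      simp only [Finset.mem_filter, Finset.mem_univ, true_and]
      constructor
      · rintro ⟨h1, h2⟩; exact le_antisymm (not_lt.mp h2) h1
      · intro h; exact ⟨h.ge, not_lt.mpr h.le⟩
  set D : ℝ := ∑ k ∈ Finset.univ.filter (fun k => v k = τ), π k with hD
  have hD0 : 0 ≤ D := Finset.sum_nonneg fun k _ => hπ k
  set c : ℝ := if D = 0 then 0 else (α - g τ) / D with hc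
  have hc0 : 0 ≤ c := by
    rw [hc]
    split
    · exact le_refl 0
    · exact div_nonneg (by linarith) hD0
  have hc1 : c ≤ 1 := by
    rw [hc]
    split
    · norm_num
    · rename_i hDne
      rw [div_le_one (lt_of_le_of_ne hD0 (Ne.symm hDne))]
      linarith [hsplit, hBα]
  have hcD : c * D = α - g τ := by
    rw [hc]
    split
    · rename_i hD0'
      rw [hD0', mul_zero]
      linarith [hsplit, hBα, hA, hD0']
    · rename_i hDne
      field_simp
  -- the optimal ν
  set ν : K → ℝ := fun k => if τ < v k then π k else if v k = τ then c * π k else 0 with hν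
  have hνbd : ∀ k, 0 ≤ ν k ∧ ν k ≤ π k := by
    intro k
    rw [hν]
    simp only []
    split
    · exact ⟨hπ k, le_refl _⟩
    · split
      · constructor
        · exact mul_nonneg hc0 (hπ k)
        · calc c * π k ≤ 1 * π k := mul_le_mul_of_nonneg_right hc1 (hπ k)
            _ = π k := one_mul _
      · exact ⟨le_refl 0, hπ k⟩
  have hνsum : ∑ k, ν k = α := by
    have h1 : ∑ k, ν k = g τ + c * D := by
      rw [hg, hD]
      rw [← Finset.sum_filter_add_sum_filter_not Finset.univ (fun k => τ < v k) ν]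
      congr 1
      · exact Finset.sum_congr rfl fun k hk => by
          simp only [Finset.mem_filter] at hk
          rw [hν]; simp only [if_pos hk.2]
      · rw [Finset.mul_sum]
        rw [← Finset.sum_filter_add_sum_filter_not
          (Finset.univ.filter (fun k => ¬ τ < v k)) (fun k => v k = τ) ν]
        have e1 : (Finset.univ.filter (fun k => ¬ τ < v k)).filter (fun k => v k = τ)
            = Finset.univ.filter (fun k => v k = τ) := by
          ext k
          simp only [Finset.mem_filter, Finset.mem_univ, true_and]
          constructor
          · rintro ⟨_, h⟩; exact h
          · intro h; exact ⟨not_lt.mpr h.le, h⟩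
        have e2 : ∑ k ∈ (Finset.univ.filter (fun k => ¬ τ < v k)).filter
            (fun k => ¬ v k = τ), ν k = 0 := by
          refine Finset.sum_eq_zero fun k hk => ?_
          simp only [Finset.mem_filter] at hk
          rw [hν]; simp only [if_neg hk.1.2, if_neg hk.2]
        rw [e1, e2, add_zero]
        refine Finset.sum_congr rfl fun k hk => ?_
        simp only [Finset.mem_filter, Finset.mem_univ, true_and] at hk
        rw [hν]
        simp only [if_neg (not_lt.mpr hk.le), if_pos hk]
    rw [h1, hcD]
    ring
  -- value of f at τ
  have hfτ : f τ = α⁻¹ * ∑ k, ν k * v k := by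
    have e1 : ∑ k, π k * max (v k - τ) 0 = ∑ k, ν k * (v k - τ) := by
      refine Finset.sum_congr rfl fun k _ => ?_
      rw [hν]
      simp only []
      rcases lt_trichotomy τ (v k) with h | h | h
      · rw [if_pos h, max_eq_left (by linarith)]
      · rw [if_neg (by rw[h]; exact lt_irrefl _), if_pos h.symm, ← h]
        simp
      · rw [if_neg (by linarith), if_neg (by intro he; linarith [he.le]), zero_mul,
          max_eq_right (by linarith), mul_zero]
    have e2 : ∑ k, ν k * (v k - τ) = (∑ k, ν k * v k) - α * τ := by
      rw [← hνsum, Finset.sum_mul, ← Finset.sum_sub_distrib]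
      exact Finset.sum_congr rfl fun k _ => by ring
    simp only [hfdef]
    rw [e1, e2, mul_sub]
    have : α⁻¹ * (α * τ) = τ := by field_simp
    rw [this]
    ring
  refine ⟨ν, hνbd, hνsum, ?_, fun ν' hν' hsν' => ?_⟩
  · refine le_antisymm ?_ ?_
    · calc (⨅ τ' : ℝ, f τ') ≤ f τ := by
            refine ciInf_le ⟨α⁻¹ * ∑ k, ν k * v k, ?_⟩ τ
            rintro x ⟨τ', rfl⟩
            exact weak ν hνbd hνsum τ'
        _ = α⁻¹ * ∑ k, ν k * v k := hfτ
    · exact le_ciInf (weak ν hνbd hνsum)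
  · calc α⁻¹ * ∑ k, ν' k * v k ≤ f τ := weak ν' hν' hsν' τ
      _ = α⁻¹ * ∑ k, ν k * v k := hfτ
end

section
/- Let Y ⊆ ℝ^n be a nonempty set, let a : ℝ^n → ℝ^d and b : ℝ^n → ℝ be arbitrary functions, and define the affinely parameterized hypothesis F_θ(y) = ⟨θ, a(y)⟩ + b(y) for θ ∈ ℝ^d. Fix x ∈ ℝ^n and let Θ ⊆ ℝ^d be a convex set such that for every θ ∈ Θ the infimum m(θ) := inf_{y∈Y} F_θ(y) is finite. Then the bounded rationality loss, namely the map (θ, δ) ↦ max( F_θ(x) − m(θ) − δ, 0 ), is jointly convex on Θ × ℝ. -/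
open scoped RealInnerProductSpace

/-- For an affinely parameterized hypothesis `F θ y = ⟨θ, a y⟩ + b y`, a fixed
response `x`, and a convex search space `Θ` on which `m θ = inf_{y ∈ Y} F θ y` is finite,
the bounded rationality loss `(θ, δ) ↦ max (F θ x − m θ − δ) 0` is jointly convex on
`Θ × ℝ`. -/
theorem stmt_11 {n d : ℕ}
    (Y : Set (EuclideanSpace ℝ (Fin n))) (hY : Y.Nonempty)
    (a : EuclideanSpace ℝ (Fin n) → EuclideanSpace ℝ (Fin d))
    (b : EuclideanSpace ℝ (Fin n) → ℝ)
    (F : EuclideanSpace ℝ (Fin d) → EuclideanSpace ℝ (Fin n) → ℝ)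
    (hF : ∀ θ y, F θ y = ⟪θ, a y⟫ + b y)
    (x : EuclideanSpace ℝ (Fin n))
    (Θ : Set (EuclideanSpace ℝ (Fin d))) (hΘ : Convex ℝ Θ)
    (hbdd : ∀ θ ∈ Θ, BddBelow ((fun y => F θ y) '' Y))
    (m : EuclideanSpace ℝ (Fin d) → ℝ)
    (hm : ∀ θ, m θ = sInf ((fun y => F θ y) '' Y)) :
    ConvexOn ℝ (Θ ×ˢ (Set.univ : Set ℝ))
      (fun p : EuclideanSpace ℝ (Fin d) × ℝ => max (F p.1 x - m p.1 - p.2) 0) := by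
  have hmle : ∀ θ ∈ Θ, ∀ y ∈ Y, m θ ≤ F θ y := by
    intro θ hθ y hy
    rw [hm]
    exact csInf_le (hbdd θ hθ) ⟨y, hy, rfl⟩
  constructor
  · exact hΘ.prod convex_univ
  · rintro ⟨θ₁, δ₁⟩ ⟨h1, -⟩ ⟨θ₂, δ₂⟩ ⟨h2, -⟩ s t hs ht hst
    simp only
    apply max_le
    · have hθ : s • θ₁ + t • θ₂ ∈ Θ := hΘ h1 h2 hs ht hst
      have key : ∀ z, F (s • θ₁ + t • θ₂) z = s * F θ₁ z + t * F θ₂ z := by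
        intro z
        simp only [hF, inner_add_left, inner_smul_left, RCLike.conj_to_real]
        linear_combination (-(b z)) * hst
      have hFx := key x
      have hmge : s * m θ₁ + t * m θ₂ ≤ m (s • θ₁ + t • θ₂) := by
        rw [hm (s • θ₁ + t • θ₂)]
        apply le_csInf ((hY.image _))
        rintro _ ⟨y, hy, rfl⟩
        show s * m θ₁ + t * m θ₂ ≤ F (s • θ₁ + t • θ₂) y
        rw [key y]
        have := hmle θ₁ h1 y hy
        have := hmle θ₂ h2 y hy
        nlinarith
      have : F (s • θ₁ + t • θ₂) x - m (s • θ₁ + t • θ₂) - (s * δ₁ + t * δ₂)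
          ≤ s * (F θ₁ x - m θ₁ - δ₁) + t * (F θ₂ x - m θ₂ - δ₂) := by
        rw [hFx]; linarith
      calc F (s • θ₁ + t • θ₂) x - m (s • θ₁ + t • θ₂) - (s • δ₁ + t • δ₂)
          ≤ s * (F θ₁ x - m θ₁ - δ₁) + t * (F θ₂ x - m θ₂ - δ₂) := by
            simpa [smul_eq_mul] using this
        _ ≤ s * max (F θ₁ x - m θ₁ - δ₁) 0 + t * max (F θ₂ x - m θ₂ - δ₂) 0 := by
            gcongr <;> [exact le_max_left _ _; exact le_max_left _ _]
        _ = s • max (F θ₁ x - m θ₁ - δ₁) 0 + t • max (F θ₂ x - m θ₂ - δ₂) 0 := by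
            simp [smul_eq_mul]
    · positivity
end
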